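/- Let (A_i)_{i∈I} be a family of pairwise disjoint nonempty sets, for each i ∈ I let B_i⁰ = A_i × {0} and B_i¹ = A_i × {1}, let t be a further object not in any B_i⁰ or B_i¹, and let G be the simple graph with vertex set {t} ∪ ⋃_{i∈I}(B_i⁰ ∪ B_i¹) and edge set consisting of: {t, x} for every i ∈ I and x ∈ B_i⁰; {x, y} for every i ∈ I, x ∈ B_i⁰, y ∈ B_i¹; {x, y} for every i ∈ I and distinct x, y ∈ B_i⁰; and {x, y} for every i ∈ I and distinct x, y ∈ B_i¹. Then every minimal dominating set D of G satisfies |(B_i⁰ ∪ B_i¹) ∩ D| = 1 for every i ∈ I. -/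

import Mathlib

/-- `D` is a dominating set of `G`. -/
def IsDomSet {V : Type*} (G : SimpleGraph V) (D : Set V) : Prop :=
  ∀ v : V, v ∈ D ∨ ∃ d ∈ D, G.Adj v d

/-- `D` is a minimal dominating set of `G`: a dominating set with no proper subset
that is a dominating set. -/
def IsMinDomSet {V : Type*} (G : SimpleGraph V) (D : Set V) : Prop :=
  IsDomSet G D ∧ ∀ D' : Set V, D' ⊂ D → ¬ IsDomSet G D'

/-- Let `(A i)` be pairwise disjoint nonempty sets covering `α`, and for each `i` let
`B i 0 = A i × {0}` and `B i 1 = A i × {1}` inside `α × Fin 2`.  The vertices are these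
pairs together with one extra vertex `t = none` (so the vertex type is
`Option (α × Fin 2)`), and the edges are: `{t, x}` for `x ∈ B i 0`; `{x, y}` for
`x ∈ B i 0`, `y ∈ B i 1`; and `{x, y}` for distinct `x, y ∈ B i 0` or distinct
`x, y ∈ B i 1`.  Then every minimal dominating set `D` of this graph contains exactly
one vertex of `B i 0 ∪ B i 1` for every `i`. -/
theorem minimal_dominating_set_picks_one {α : Type*} {I : Type*} (A : I → Set α)
    (hdisj : ∀ i j : I, i ≠ j → Disjoint (A i) (A j))
    (hne : ∀ i, (A i).Nonempty)
    (hcov : ∀ a : α, ∃ i, a ∈ A i)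
    (G : SimpleGraph (Option (α × Fin 2)))
    (hadj : ∀ u v : Option (α × Fin 2), G.Adj u v ↔
      (∃ i, ∃ x : α × Fin 2, x.1 ∈ A i ∧ x.2 = 0 ∧ s(u, v) = s(none, some x)) ∨
      (∃ i, ∃ x y : α × Fin 2, x.1 ∈ A i ∧ x.2 = 0 ∧ y.1 ∈ A i ∧ y.2 = 1 ∧
        s(u, v) = s(some x, some y)) ∨
      (∃ i, ∃ x y : α × Fin 2, x.1 ∈ A i ∧ x.2 = 0 ∧ y.1 ∈ A i ∧ y.2 = 0 ∧ x ≠ y ∧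
        s(u, v) = s(some x, some y)) ∨
      (∃ i, ∃ x y : α × Fin 2, x.1 ∈ A i ∧ x.2 = 1 ∧ y.1 ∈ A i ∧ y.2 = 1 ∧ x ≠ y ∧
        s(u, v) = s(some x, some y)))
    (D : Set (Option (α × Fin 2))) (hD : IsMinDomSet G D) (i : I) :
    ∃! v : Option (α × Fin 2), v ∈ D ∧ ∃ x : α × Fin 2, v = some x ∧ x.1 ∈ A i := by
  obtain ⟨hDom, hMin⟩ := hD
  have fin2 : ∀ a : Fin 2, a = 0 ∨ a = 1 := by decide
  -- any two distinct block-i vertices are adjacent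
  have hblock : ∀ (x y : α × Fin 2), x.1 ∈ A i → y.1 ∈ A i → x ≠ y →
      G.Adj (some x) (some y) := by
    intro x y hx hy hxy
    rw [hadj]
    rcases fin2 x.2 with h0 | h1 <;> rcases fin2 y.2 with g0 | g1
    · exact Or.inr (Or.inr (Or.inl ⟨i, x, y, hx, h0, hy, g0, hxy, rfl⟩))
    · exact Or.inr (Or.inl ⟨i, x, y, hx, h0, hy, g1, rfl⟩)
    · exact Or.inr (Or.inl ⟨i, y, x, hy, g0, hx, h1, Sym2.eq_swap⟩)
    · exact Or.inr (Or.inr (Or.inr ⟨i, x, y, hx, h1, hy, g1, hxy, rfl⟩))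
  -- same index from disjointness
  have hsame : ∀ {j : I} {a : α}, a ∈ A i → a ∈ A j → j = i := by
    intro j a hai haj
    by_contra hji
    exact Set.disjoint_left.mp (hdisj j i hji) haj hai
  -- neighbors of a block-i vertex
  have hnbr : ∀ (x : α × Fin 2) (u : Option (α × Fin 2)), x.1 ∈ A i → G.Adj u (some x) →
      (u = none ∧ x.2 = 0) ∨ ∃ y : α × Fin 2, u = some y ∧ y.1 ∈ A i ∧ y ≠ x := by
    intro x u hx h
    rw [hadj] at h
    rcases h with ⟨j, z, hz, hz0, he⟩ | ⟨j, z, y, hz, hz0, hy, hy1, he⟩ |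
      ⟨j, z, y, hz, hz0, hy, hy0, hzy, he⟩ | ⟨j, z, y, hz, hz1, hy, hy1, hzy, he⟩
    · rcases Sym2.eq_iff.mp he with ⟨hu, hv⟩ | ⟨hu, hv⟩
      · exact Or.inl ⟨hu, by cases Option.some_injective _ hv; exact hz0⟩
      · exact absurd hv (by simp)
    · rcases Sym2.eq_iff.mp he with ⟨hu, hv⟩ | ⟨hu, hv⟩
      · cases Option.some_injective _ hv
        refine Or.inr ⟨z, hu, (hsame hx hy ▸ hz), fun h => ?_⟩
        rw [h] at hz0; rw [hz0] at hy1; exact absurd hy1 (by decide)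
      · cases Option.some_injective _ hv
        refine Or.inr ⟨y, hu, (hsame hx hz ▸ hy), fun h => ?_⟩
        rw [h] at hy1; rw [hy1] at hz0; exact absurd hz0 (by decide)
    · rcases Sym2.eq_iff.mp he with ⟨hu, hv⟩ | ⟨hu, hv⟩
      · cases Option.some_injective _ hv
        exact Or.inr ⟨z, hu, (hsame hx hy ▸ hz), fun h => hzy (h.trans rfl)⟩
      · cases Option.some_injective _ hv
        exact Or.inr ⟨y, hu, (hsame hx hz ▸ hy), fun h => hzy (h ▸ rfl)⟩
    · rcases Sym2.eq_iff.mp he with ⟨hu, hv⟩ | ⟨hu, hv⟩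
      · cases Option.some_injective _ hv
        exact Or.inr ⟨z, hu, (hsame hx hy ▸ hz), fun h => hzy (h.trans rfl)⟩
      · cases Option.some_injective _ hv
        exact Or.inr ⟨y, hu, (hsame hx hz ▸ hy), fun h => hzy (h ▸ rfl)⟩
  -- existence
  obtain ⟨a, ha⟩ := hne i
  have hex : ∃ v, v ∈ D ∧ ∃ x : α × Fin 2, v = some x ∧ x.1 ∈ A i := by
    rcases hDom (some (a, 1)) with hmem | ⟨d, hd, hadj'⟩
    · exact ⟨some (a, 1), hmem, (a, 1), rfl, ha⟩
    · rcases hnbr (a, 1) d ha (G.adj_symm hadj') with ⟨_, h0⟩ | ⟨y, hy, hyi, _⟩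
      · simp at h0
      · exact ⟨d, hd, y, hy, hyi⟩
  obtain ⟨v1, hv1⟩ := hex
  refine ⟨v1, hv1, ?_⟩
  intro v2 hv2
  by_contra hne12
  obtain ⟨hv1D, x1, rfl, hx1⟩ := hv1
  obtain ⟨hv2D, x2, rfl, hx2⟩ := hv2
  have hx12 : x2 ≠ x1 := fun h => hne12 (by rw [h])
  -- choose which vertex to remove (w) and which to keep (k)
  obtain ⟨w, k, hwD, hkD, hwi, hki, hwk, hcond⟩ :
      ∃ w k : α × Fin 2, some w ∈ D ∧ some k ∈ D ∧ w.1 ∈ A i ∧ k.1 ∈ A i ∧ w ≠ k ∧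
        (w.2 = 1 ∨ k.2 = 0) := by
    rcases fin2 x2.2 with h2 | h2
    · rcases fin2 x1.2 with h1 | h1
      · exact ⟨x2, x1, hv2D, hv1D, hx2, hx1, hx12, Or.inr h1⟩
      · exact ⟨x1, x2, hv1D, hv2D, hx1, hx2, hx12.symm, Or.inl h1⟩
    · exact ⟨x2, x1, hv2D, hv1D, hx2, hx1, hx12, Or.inl h2⟩
  set D' : Set (Option (α × Fin 2)) := D \ {some w} with hD'
  have hss : D' ⊂ D := Set.sdiff_singleton_ssubset.mpr hwD
  apply hMin D' hss
  intro u
  by_cases huD' : u ∈ D'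
  · exact Or.inl huD'
  have hkD' : some k ∈ D' := ⟨hkD, fun h => hwk (Option.some_injective _ (Set.mem_singleton_iff.mp h)).symm⟩
  by_cases huw : u = some w
  · subst huw
    exact Or.inr ⟨some k, hkD', hblock w k hwi hki hwk⟩
  have huD : u ∉ D := fun h => huD' ⟨h, huw⟩
  rcases hDom u with h | ⟨d, hdD, hadj'⟩
  · exact absurd h huD
  by_cases hdw : d = some w
  · subst hdw
    rcases hnbr w u hwi hadj' with ⟨hu0, hw0⟩ | ⟨y, hy, hyi, hyw⟩
    · have hk0 : k.2 = 0 := by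
        rcases hcond with h | h
        · rw [hw0] at h; exact absurd h (by decide)
        · exact h
      subst hu0
      refine Or.inr ⟨some k, hkD', ?_⟩
      rw [hadj]
      exact Or.inl ⟨i, k, hki, hk0, rfl⟩
    · by_cases hyk : y = k
      · exact absurd (hy ▸ hyk ▸ hkD' : u ∈ D') huD'
      · exact Or.inr ⟨some k, hkD', hy ▸ hblock y k hyi hki hyk⟩
  · exact Or.inr ⟨d, ⟨hdD, hdw⟩, hadj'⟩
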